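/- Let J : ℝ^d → ℝ be twice continuously differentiable with L₃-Lipschitz Hessian. Let θ, h ∈ ℝ^d and H a symmetric matrix with ‖H - ∇²J(θ)‖ ≤ √(L₃ε), H + (M/2)‖h‖I ⪰ 0, ‖h‖ ≤ (1/2)√(ε/L₃), and M = 30L₃. Then λ_min(∇²J(θ + h)) ≥ -9√(L₃ε). -/

import Mathlib

open scoped RealInnerProductSpace

theorem hessian_lower_bound_at_next_iterate (d : ℕ) (hd : 0 < d) (ε L₃ : ℝ)
    (hε : 0 < ε) (hL : 0 < L₃)
    (J : EuclideanSpace ℝ (Fin d) → ℝ) (hJ : ContDiff ℝ 2 J)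
    (Hess : EuclideanSpace ℝ (Fin d) →
      EuclideanSpace ℝ (Fin d) →L[ℝ] EuclideanSpace ℝ (Fin d))
    (hHess : ∀ x, HasFDerivAt (gradient J) (Hess x) x)
    (hLip : ∀ x y, ‖Hess x - Hess y‖ ≤ L₃ * ‖x - y‖)
    (θ h : EuclideanSpace ℝ (Fin d))
    (H : EuclideanSpace ℝ (Fin d) →L[ℝ] EuclideanSpace ℝ (Fin d))
    (hHsym : IsSelfAdjoint H) (M : ℝ) (hM : M = 30 * L₃)
    (hHerr : ‖H - Hess θ‖ ≤ Real.sqrt (L₃ * ε))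
    (hpsd : ∀ x : EuclideanSpace ℝ (Fin d),
      0 ≤ ⟪x, H x⟫ + (M / 2) * ‖h‖ * ‖x‖ ^ 2)
    (hsmall : ‖h‖ ≤ (1 / 2) * Real.sqrt (ε / L₃)) :
    ∀ x : EuclideanSpace ℝ (Fin d),
      ⟪x, Hess (θ + h) x⟫ ≥ -(9 * Real.sqrt (L₃ * ε)) * ‖x‖ ^ 2 := by
  intro x
  set S := Real.sqrt (L₃ * ε) with hS
  have hSnn : 0 ≤ S := Real.sqrt_nonneg _
  have hsL : (0:ℝ) < Real.sqrt L₃ := Real.sqrt_pos.2 hL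
  have hms : Real.sqrt L₃ * Real.sqrt L₃ = L₃ := Real.mul_self_sqrt hL.le
  have h1 : L₃ * Real.sqrt (ε / L₃) = S := by
    rw [hS, Real.sqrt_div hε.le, Real.sqrt_mul hL.le]
    field_simp
    linear_combination (-1) * hms
  have key : L₃ * ‖h‖ ≤ (1/2) * S := by
    have := mul_le_mul_of_nonneg_left hsmall hL.le
    nlinarith [this, h1]
  have hA : ‖Hess (θ + h) - H‖ ≤ L₃ * ‖h‖ + S := by
    have heq : Hess (θ + h) - H = (Hess (θ + h) - Hess θ) + (Hess θ - H) := by abel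
    calc ‖Hess (θ + h) - H‖ ≤ ‖Hess (θ + h) - Hess θ‖ + ‖Hess θ - H‖ := by
          rw [heq]; exact norm_add_le _ _
      _ ≤ L₃ * ‖(θ + h) - θ‖ + S := by
          refine add_le_add (hLip _ _) ?_
          rw [norm_sub_rev]; exact hHerr
      _ = L₃ * ‖h‖ + S := by rw [add_sub_cancel_left]
  have h2 : ‖(Hess (θ + h) - H) x‖ ≤ (L₃ * ‖h‖ + S) * ‖x‖ :=
    le_trans ((Hess (θ + h) - H).le_opNorm x)
      (mul_le_mul_of_nonneg_right hA (norm_nonneg x))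
  have h3 : |⟪x, (Hess (θ + h) - H) x⟫| ≤ ‖x‖ * ‖(Hess (θ + h) - H) x‖ :=
    abs_real_inner_le_norm _ _
  have inner_lb : ⟪x, (Hess (θ + h) - H) x⟫ ≥ -((L₃ * ‖h‖ + S) * ‖x‖ ^ 2) := by
    nlinarith [neg_abs_le ⟪x, (Hess (θ + h) - H) x⟫, norm_nonneg x,
      norm_nonneg ((Hess (θ + h) - H) x)]
  have hsplit : ⟪x, Hess (θ + h) x⟫ = ⟪x, H x⟫ + ⟪x, (Hess (θ + h) - H) x⟫ := by
    rw [ContinuousLinearMap.sub_apply, inner_sub_right]; ring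
  subst hM
  have hH := hpsd x
  rw [hsplit]
  have hkx := mul_le_mul_of_nonneg_right key (sq_nonneg ‖x‖)
  nlinarith [hkx, hH, inner_lb, norm_nonneg h, sq_nonneg ‖x‖]
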